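/- arXiv:2209.07388 — 3 statements merged into one kernel-verified Lean document; each statement's English description precedes it below -/
import Mathlib

section
/- Assume Hypothesis (QV). If K ≤ S is abelian and S_{Q,V}(K) ≠ 0, then K is F-conjugate to Q; in particular, for any α ∈ Iso_F(Q,K) one has S_{Q,V}(K) = ^αV. -/
open Subgroup

section Core

variable {S : Type*} [Group S]

/-- Conjugation by `s` as a homomorphism between subgroups `P` and `Q` of `S`,
when `s` conjugates `P` into `Q`. -/
def conjMap (s : S) (P Q : Subgroup S) (h : ∀ x ∈ P, s * x * s⁻¹ ∈ Q) : P →* Q where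
  toFun x := ⟨s * ↑x * s⁻¹, h x x.2⟩
  map_one' := by ext; simp
  map_mul' x y := by ext; push_cast; group

/-- The range in `S` of a homomorphism between subgroups of `S`. -/
def rngS {P Q : Subgroup S} (φ : P →* Q) : Subgroup S := (Q.subtype.comp φ).range

lemma rngS_le {P Q : Subgroup S} (φ : P →* Q) : rngS φ ≤ Q := by
  rintro x ⟨y, rfl⟩
  exact (φ y).2

/-- A fusion system on a group `S`: a collection of injective homomorphisms between
the subgroups of `S`, containing all homomorphisms induced by conjugation in `S`,
closed under composition and taking inverses of isomorphisms, and such that every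
morphism factors as an isomorphism in the system followed by an inclusion. -/
structure FusionSystem (S : Type*) [Group S] where
  Hom : ∀ P Q : Subgroup S, Set (P →* Q)
  inj : ∀ {P Q : Subgroup S} (φ : P →* Q), φ ∈ Hom P Q → Function.Injective φ
  conj_mem : ∀ (P Q : Subgroup S) (s : S) (h : ∀ x ∈ P, s * x * s⁻¹ ∈ Q),
    conjMap s P Q h ∈ Hom P Q
  comp_mem : ∀ {P Q R : Subgroup S} (φ : P →* Q) (ψ : Q →* R),
    φ ∈ Hom P Q → ψ ∈ Hom Q R → ψ.comp φ ∈ Hom P R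
  inv_mem : ∀ {P Q : Subgroup S} (e : P ≃* Q), e.toMonoidHom ∈ Hom P Q →
    e.symm.toMonoidHom ∈ Hom Q P
  factor : ∀ {P Q : Subgroup S} (φ : P →* Q) (hφ : φ ∈ Hom P Q),
    ∃ e : P ≃* rngS φ, e.toMonoidHom ∈ Hom P (rngS φ) ∧
      (Subgroup.inclusion (rngS_le φ)).comp e.toMonoidHom = φ

namespace FusionSystem

variable (F : FusionSystem S)

/-- The set of `F`-isomorphisms from `P` to `Q`. -/
def IsoF (P Q : Subgroup S) : Set (P ≃* Q) := {e | e.toMonoidHom ∈ F.Hom P Q}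

/-- Two subgroups are `F`-conjugate if they are isomorphic in `F`. -/
def FConj (P Q : Subgroup S) : Prop := ∃ e : P ≃* Q, e.toMonoidHom ∈ F.Hom P Q

/-- A subgroup `P ≤ S` is `F`-centric if `C_S(Q) ≤ Q` for every `Q` that is
`F`-conjugate to `P`. -/
def Centric (P : Subgroup S) : Prop :=
  ∀ Q : Subgroup S, F.FConj P Q → Subgroup.centralizer (Q : Set S) ≤ Q

end FusionSystem

/-- Conjugation gives a homomorphism from the normalizer of `P` to the automorphisms
of `P`. -/
def conjAut (P : Subgroup S) : (normalizer (P : Set S)) →* MulAut P where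
  toFun g :=
    { toFun := fun x => ⟨↑g * ↑x * (↑g)⁻¹, (mem_normalizer_iff.mp g.2 ↑x).mp x.2⟩
      invFun := fun x => ⟨(↑g)⁻¹ * ↑x * ↑g, by
        have := (mem_normalizer_iff.mp ((normalizer (P : Set S)).inv_mem g.2) (↑x)).mp x.2
        simpa using this⟩
      left_inv := fun x => by ext; simp [mul_assoc]
      right_inv := fun x => by ext; simp [mul_assoc]
      map_mul' := fun x y => by ext; push_cast; group }
  map_one' := by ext; simp
  map_mul' g h := by ext x; simp only [MulAut.mul_apply, MulEquiv.coe_mk, Equiv.coe_fn_mk]; push_cast; group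

namespace FusionSystem

variable (F : FusionSystem S)

/-- The group `Aut_F(P)` of `F`-automorphisms of `P`, as a subgroup of `MulAut P`. -/
def AutF (P : Subgroup S) : Subgroup (MulAut P) where
  carrier := {e | e.toMonoidHom ∈ F.Hom P P}
  one_mem' := by
    have h : ∀ x ∈ P, (1 : S) * x * (1 : S)⁻¹ ∈ P := by intro x hx; simpa using hx
    have h2 := F.conj_mem P P 1 h
    have he : conjMap (1 : S) P P h = (1 : MulAut P).toMonoidHom := by
      ext x; simp [conjMap]
    rwa [he] at h2
  mul_mem' := by
    intro a b ha hb
    have he : (a * b).toMonoidHom = a.toMonoidHom.comp b.toMonoidHom := by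
      ext x; rfl
    simp only [Set.mem_setOf_eq] at *
    rw [he]
    exact F.comp_mem _ _ hb ha
  inv_mem' := by
    intro a ha
    exact F.inv_mem a ha

end FusionSystem

/-- The inner automorphisms of (the group) `P`, as a subgroup of `MulAut P`. -/
def innAut (P : Type*) [Group P] : Subgroup (MulAut P) := (MulAut.conj : P →* MulAut P).range

lemma innAut_normal (P : Type*) [Group P] : (innAut P).Normal := by
  constructor
  rintro _ ⟨x, rfl⟩ g
  refine ⟨g x, ?_⟩
  ext y
  simp [MulAut.conj]

namespace FusionSystem

variable (F : FusionSystem S)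

/-- `Inn(P)` as a subgroup of `Aut_F(P)`. -/
def innFOf (P : Subgroup S) : Subgroup (F.AutF P) := (innAut P).subgroupOf (F.AutF P)

instance innFOf_normal (P : Subgroup S) : (F.innFOf P).Normal :=
  Subgroup.Normal.subgroupOf (innAut_normal P) _

/-- `Out_F(P) = Aut_F(P)/Inn(P)`. -/
def OutF (P : Subgroup S) : Type _ := F.AutF P ⧸ F.innFOf P

noncomputable instance (P : Subgroup S) : Group (F.OutF P) :=
  inferInstanceAs (Group (F.AutF P ⧸ F.innFOf P))

/-- The quotient map `Aut_F(P) → Out_F(P)`. -/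
def outMk (P : Subgroup S) : F.AutF P →* F.OutF P := QuotientGroup.mk' (F.innFOf P)

/-- Conjugation gives a homomorphism `N_S(P) → Aut_F(P)`. -/
def toAutF (P : Subgroup S) : (normalizer (P : Set S)) →* F.AutF P :=
  (conjAut P).codRestrict (F.AutF P) (fun g => by
    have h : ∀ x ∈ P, (↑g : S) * x * (↑g : S)⁻¹ ∈ P := fun x hx =>
      (mem_normalizer_iff.mp g.2 x).mp hx
    have h2 := F.conj_mem P P ↑g h
    have he : conjMap (↑g : S) P P h = (conjAut P g).toMonoidHom := by
      ext x; rfl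
    rw [he] at h2
    exact h2)

/-- For `K ≤ N_S(P)`, the subgroup `Out_K(P) ≤ Out_F(P)` of classes of automorphisms
induced by conjugation by elements of `K`. -/
noncomputable def outOf (P K : Subgroup S) (h : K ≤ (normalizer (P : Set S))) : Subgroup (F.OutF P) :=
  ((F.outMk P).comp ((F.toAutF P).comp (Subgroup.inclusion h))).range

/-- `Aut_S(P)` as a subgroup of `Aut_F(P)`. -/
def AutSF (P : Subgroup S) : Subgroup (F.AutF P) := (F.toAutF P).range

/-- `P` is fully automized (in `F`, at the prime `p`) if `Aut_S(P)` is a Sylow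
`p`-subgroup of `Aut_F(P)`. -/
def FullyAutomized (p : ℕ) [Fact p.Prime] (P : Subgroup S) : Prop :=
  ∃ Syl : Sylow p (F.AutF P), (Syl : Subgroup (F.AutF P)) = F.AutSF P

/-- `P` is receptive in `F` if every `F`-isomorphism `φ : Q → P` extends to the
subgroup `N_φ = {g ∈ N_S(Q) | φ ∘ c_g ∘ φ⁻¹ ∈ Aut_S(P)}`. -/
def Receptive (P : Subgroup S) : Prop :=
  ∀ (Q : Subgroup S) (φ : Q ≃* P), φ.toMonoidHom ∈ F.Hom Q P →
    ∃ N : Subgroup S,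
      (∀ g : S, g ∈ N ↔ ∃ hg : g ∈ (normalizer (Q : Set S)), ∃ h ∈ (normalizer (P : Set S)), ∀ q : Q,
        (↑(φ ⟨g * ↑q * g⁻¹, (mem_normalizer_iff.mp hg ↑q).mp q.2⟩) : S)
          = h * ↑(φ q) * h⁻¹) ∧
      ∃ ψ ∈ F.Hom N ⊤, ∀ (q : S) (hq : q ∈ Q) (hq' : q ∈ N),
        (↑(ψ ⟨q, hq'⟩) : S) = ↑(φ ⟨q, hq⟩)

/-- A fusion system is saturated if every `F`-conjugacy class of subgroups contains a
subgroup that is fully automized and receptive. -/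
def Saturated (p : ℕ) [Fact p.Prime] : Prop :=
  ∀ P : Subgroup S, ∃ P' : Subgroup S, F.FConj P P' ∧
    F.FullyAutomized p P' ∧ F.Receptive P'

end FusionSystem

end Core

section SQV

open DirectSum

variable {S : Type*} [Group S]

namespace FusionSystem

variable (F : FusionSystem S)

/-- Conjugation of `F`-automorphism groups by an `F`-isomorphism `e : Q ≃* L`:
`γ ↦ e⁻¹ ∘ γ ∘ e`. -/
def autConj {Q L : Subgroup S} (e : Q ≃* L) (he : e.toMonoidHom ∈ F.Hom Q L) :
    F.AutF L →* F.AutF Q where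
  toFun γ := ⟨(e.trans γ.1).trans e.symm, by
    have h1 : ((e.trans γ.1).trans e.symm).toMonoidHom
        = (e.symm.toMonoidHom.comp γ.1.toMonoidHom).comp e.toMonoidHom := by
      ext x; rfl
    show ((e.trans γ.1).trans e.symm).toMonoidHom ∈ F.Hom Q Q
    rw [h1]
    exact F.comp_mem _ _ he (F.comp_mem _ _ γ.2 (F.inv_mem e he))⟩
  map_one' := by
    ext x
    simp
  map_mul' a b := by
    ext x
    simp [MulAut.mul_apply]

/-- The induced homomorphism `Out_F(L) → Out_F(Q)` given by `[γ] ↦ [e⁻¹ ∘ γ ∘ e]`. -/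
def outConj {Q L : Subgroup S} (e : Q ≃* L) (he : e.toMonoidHom ∈ F.Hom Q L) :
    F.OutF L →* F.OutF Q :=
  QuotientGroup.map _ _ (F.autConj e he) (by
    intro γ hγ
    have hγ' : (γ : MulAut ↥L) ∈ innAut ↥L := hγ
    obtain ⟨x, hx⟩ := hγ'
    show (F.autConj e he) γ ∈ F.innFOf Q
    refine ⟨e.symm x, ?_⟩
    have hx' : ∀ z : L, (γ : MulAut L) z = x * z * x⁻¹ := by
      intro z
      rw [← hx]
      rfl
    ext y
    simp only [MulAut.conj_apply]
    have h2 : ((F.AutF Q).subtype ((F.autConj e he) γ)) y = e.symm ((γ : MulAut L) (e y)) := rfl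
    rw [h2, hx' (e y)]
    push_cast [map_mul, map_inv, MulEquiv.symm_apply_apply]
    ring_nf)

end FusionSystem

/-- The relative trace of an action with respect to a subgroup `K ≤ G`, given by summing
the action of a set of representatives of the left cosets of `K` in `G`. -/
noncomputable def cosetTrace {p : ℕ} {V : Type*} [AddCommGroup V] [Module (ZMod p) V]
    {G : Type*} [Group G] [Finite G] (K : Subgroup G) (σ : G →* (V →ₗ[ZMod p] V)) :
    V →ₗ[ZMod p] V :=
  haveI : Finite (G ⧸ K) := Quotient.finite _
  haveI := Fintype.ofFinite (G ⧸ K)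
  ∑ x : G ⧸ K, σ (Quotient.out x)

namespace FusionSystem

variable (F : FusionSystem S)

/-- A choice of an `F`-isomorphism `Q ≃* L` for `F`-conjugate subgroups. -/
noncomputable def chosenIso {Q L : Subgroup S} (hc : F.FConj Q L) : Q ≃* L := hc.choose

lemma chosenIso_mem {Q L : Subgroup S} (hc : F.FConj Q L) :
    (F.chosenIso hc).toMonoidHom ∈ F.Hom Q L := hc.choose_spec

end FusionSystem

/-- The conjugate `ˣL` of a subgroup. -/
def conjSub (x : S) (L : Subgroup S) : Subgroup S :=
  Subgroup.map (MulAut.conj x).toMonoidHom L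

lemma conjSub_one (L : Subgroup S) : conjSub 1 L = L := by
  ext z
  simp [conjSub, Subgroup.mem_map, MulAut.conj_apply]

lemma conjSub_mul (x y : S) (L : Subgroup S) :
    conjSub (x * y) L = conjSub x (conjSub y L) := by
  ext z
  simp only [conjSub, Subgroup.mem_map, MulEquiv.coe_toMonoidHom, MulAut.conj_apply]
  constructor
  · rintro ⟨a, ha, rfl⟩
    exact ⟨y * a * y⁻¹, ⟨a, ha, rfl⟩, by group⟩
  · rintro ⟨b, ⟨a, ha, rfl⟩, rfl⟩
    exact ⟨a, ha, by group⟩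

/-- Conjugation as an isomorphism `L ≃* ˣL = L'`. -/
def conjEquiv (r : S) (L L' : Subgroup S) (h : conjSub r L = L') : L ≃* L' :=
  (MulEquiv.subgroupMap (MulAut.conj r) L).trans (MulEquiv.subgroupCongr h)

lemma conjEquiv_mem (F : FusionSystem S) (r : S) (L L' : Subgroup S) (h : conjSub r L = L') :
    (conjEquiv r L L' h).toMonoidHom ∈ F.Hom L L' := by
  have hmem : ∀ x ∈ L, r * x * r⁻¹ ∈ L' := by
    intro x hx
    rw [← h]
    exact ⟨x, hx, rfl⟩
  have he : conjMap r L L' hmem = (conjEquiv r L L' h).toMonoidHom := by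
    ext x; rfl
  rw [← he]
  exact F.conj_mem L L' r hmem

namespace FusionSystem

variable (F : FusionSystem S) {Q₀ : Subgroup S}
variable {p : ℕ} {V : Type*} [AddCommGroup V] [Module (ZMod p) V]

/-- The action of `N_P(L)` on `V` twisted by an `F`-isomorphism `α : Q₀ ≃* L`, i.e. the
action of `N_P(L)` on `^αV` through `N_P(L) → Out_F(L) → Out_F(Q₀)`. -/
noncomputable def dpActionAt (ρ : Representation (ZMod p) (F.OutF Q₀) V)
    {L : Subgroup S} (α : Q₀ ≃* L) (hα : α.toMonoidHom ∈ F.Hom Q₀ L) (P : Subgroup S) :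
    ↥(P ⊓ (normalizer (L : Set S))) →* (V →ₗ[ZMod p] V) :=
  (((ρ : F.OutF Q₀ →* (V →ₗ[ZMod p] V)).comp (F.outConj α hα)).comp (F.outMk L)).comp
    ((F.toAutF L).comp (Subgroup.inclusion inf_le_right))

/-- The action of `N_P(L)` on `^αV` for the chosen isomorphism `α : Q₀ ≃* L`. -/
noncomputable def dpAction (ρ : Representation (ZMod p) (F.OutF Q₀) V)
    {L : Subgroup S} (hc : F.FConj Q₀ L) (P : Subgroup S) :
    ↥(P ⊓ (normalizer (L : Set S))) →* (V →ₗ[ZMod p] V) :=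
  F.dpActionAt ρ (F.chosenIso hc) (F.chosenIso_mem hc) P

variable [Finite S]

/-- The summand `V_{α,L}(P) = tr_L^{N_P(L)}(^αV)` of the Díaz–Park Mackey functor. -/
noncomputable def dpSummand (ρ : Representation (ZMod p) (F.OutF Q₀) V)
    (P : Subgroup S) {L : Subgroup S} (hc : F.FConj Q₀ L) : Submodule (ZMod p) V :=
  LinearMap.range (cosetTrace (L.subgroupOf (P ⊓ (normalizer (L : Set S)))) (F.dpAction ρ hc P))

/-- The setoid of `P`-conjugacy on the subgroups of `P` that are `F`-conjugate to `Q₀`. -/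
def dpRel (Q₀ P : Subgroup S) : Setoid {L : Subgroup S // L ≤ P ∧ F.FConj Q₀ L} where
  r L₁ L₂ := ∃ x ∈ P, conjSub x L₁.1 = L₂.1
  iseqv := by
    constructor
    · intro L
      exact ⟨1, P.one_mem, conjSub_one _⟩
    · rintro L₁ L₂ ⟨x, hx, hconj⟩
      refine ⟨x⁻¹, P.inv_mem hx, ?_⟩
      rw [← hconj, ← conjSub_mul]
      simp [conjSub_one]
    · rintro L₁ L₂ L₃ ⟨x, hx, hx'⟩ ⟨y, hy, hy'⟩
      exact ⟨y * x, P.mul_mem hy hx, by rw [conjSub_mul, hx', hy']⟩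

/-- The index set of the Díaz–Park direct sum decomposition of `S_{Q₀,V}(P)`:
`P`-conjugacy classes of subgroups of `P` that are `F`-conjugate to `Q₀`. -/
def SQVIndex (Q₀ P : Subgroup S) : Type _ := Quotient (F.dpRel Q₀ P)

/-- The chosen representative of a `P`-conjugacy class. -/
noncomputable def dpRep {Q₀ P : Subgroup S} (c : F.SQVIndex Q₀ P) : Subgroup S :=
  (Quotient.out c).1

lemma dpRep_le {Q₀ P : Subgroup S} (c : F.SQVIndex Q₀ P) : F.dpRep c ≤ P :=
  (Quotient.out c).2.1

lemma dpRep_fconj {Q₀ P : Subgroup S} (c : F.SQVIndex Q₀ P) : F.FConj Q₀ (F.dpRep c) :=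
  (Quotient.out c).2.2

/-- The value `S_{Q₀,V}(P)` of the Díaz–Park Mackey functor:
the direct sum of `tr_L^{N_P(L)}(^αV)` over the `P`-conjugacy classes of subgroups `L ≤ P`
`F`-conjugate to `Q₀` (with chosen representatives and chosen isomorphisms). -/
noncomputable abbrev SQVModule (ρ : Representation (ZMod p) (F.OutF Q₀) V) (P : Subgroup S) :
    Type _ :=
  ⨁ (c : F.SQVIndex Q₀ P), ↥(F.dpSummand ρ P (F.dpRep_fconj c))

/-- The inclusion of the summand indexed by the class `c` into `S_{Q₀,V}(P)`. -/
noncomputable def dpOf (ρ : Representation (ZMod p) (F.OutF Q₀) V) (P : Subgroup S)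
    (c : F.SQVIndex Q₀ P) :
    ↥(F.dpSummand ρ P (F.dpRep_fconj c)) →ₗ[ZMod p] F.SQVModule ρ P :=
  letI := Classical.decEq (F.SQVIndex Q₀ P)
  DirectSum.lof (ZMod p) (F.SQVIndex Q₀ P) (fun c => ↥(F.dpSummand ρ P (F.dpRep_fconj c))) c

/-- The component of an element of `S_{Q₀,V}(P)` at the class `c`, as an element of `V`. -/
noncomputable def dpComp {ρ : Representation (ZMod p) (F.OutF Q₀) V} {P : Subgroup S}
    (x : F.SQVModule ρ P) (c : F.SQVIndex Q₀ P) : V :=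
  ((x : ⨁ (c : F.SQVIndex Q₀ P), ↥(F.dpSummand ρ P (F.dpRep_fconj c))) c : V)

/-- The element `[α_{L'}⁻¹ ∘ c_r ∘ α_L] ∈ Aut_F(Q₀)` transporting between the twisted
modules `^{c_r ∘ α_L}V` and `^{α_{L'}}V`. -/
noncomputable def transport {Q₀ L L' : Subgroup S} (hc : F.FConj Q₀ L) (hc' : F.FConj Q₀ L')
    (r : S) (h : conjSub r L = L') : F.AutF Q₀ :=
  ⟨((F.chosenIso hc).trans (conjEquiv r L L' h)).trans (F.chosenIso hc').symm, by
    show (((F.chosenIso hc).trans (conjEquiv r L L' h)).trans (F.chosenIso hc').symm).toMonoidHom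
      ∈ F.Hom Q₀ Q₀
    have h1 : (((F.chosenIso hc).trans (conjEquiv r L L' h)).trans
        (F.chosenIso hc').symm).toMonoidHom
        = ((F.chosenIso hc').symm.toMonoidHom.comp (conjEquiv r L L' h).toMonoidHom).comp
          (F.chosenIso hc).toMonoidHom := by
      ext x; rfl
    rw [h1]
    exact F.comp_mem _ _ (F.chosenIso_mem hc)
      (F.comp_mem _ _ (conjEquiv_mem F r L L' h) (F.inv_mem _ (F.chosenIso_mem hc')))⟩

/-- The image of `transport` in `Out_F(Q₀)`. -/
noncomputable def outTransport {Q₀ L L' : Subgroup S} (hc : F.FConj Q₀ L)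
    (hc' : F.FConj Q₀ L') (r : S) (h : conjSub r L = L') : F.OutF Q₀ :=
  F.outMk Q₀ (F.transport hc hc' r h)

/-- The relative trace `tr_{N_T(L)}^{N_R(L)}` on `^αV`, for `T ≤ R`. -/
noncomputable def dpIndTrace (ρ : Representation (ZMod p) (F.OutF Q₀) V)
    {L : Subgroup S} (hc : F.FConj Q₀ L) (T R : Subgroup S) (hTR : T ≤ R) :
    V →ₗ[ZMod p] V :=
  cosetTrace ((T ⊓ (normalizer (L : Set S))).subgroupOf (R ⊓ (normalizer (L : Set S)))) (F.dpAction ρ hc R)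

/-- The restriction and induction maps of the Díaz–Park Mackey functor `S_{Q₀,V}`,
characterized on each direct summand by the formulas of Díaz–Park:
restriction along `T ≤ P` maps the summand of the class of `L` diagonally (via the
identifications `^{c_r∘α_L}V ≅ ^{α_{L'}}V`) into the summands of the `T`-classes of the
`P`-conjugates `L'` of `L` contained in `T`, and is zero on all other components;
induction along `T ≤ R` maps the summand of the class of `L` into the summand of the
`R`-class of `L` by the relative trace `tr_{N_T(L)}^{N_R(L)}`. -/
structure SQVMaps (ρ : Representation (ZMod p) (F.OutF Q₀) V) where
  res : ∀ {T P : Subgroup S}, T ≤ P → (F.SQVModule ρ P →ₗ[ZMod p] F.SQVModule ρ T)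
  ind : ∀ {T R : Subgroup S}, T ≤ R → (F.SQVModule ρ T →ₗ[ZMod p] F.SQVModule ρ R)
  res_spec : ∀ {T P : Subgroup S} (hTP : T ≤ P) (c : F.SQVIndex Q₀ P)
    (v : ↥(F.dpSummand ρ P (F.dpRep_fconj c))) (c' : F.SQVIndex Q₀ T)
    (r : S), r ∈ P → (h : conjSub r (F.dpRep c) = F.dpRep c') →
      F.dpComp (res hTP (F.dpOf ρ P c v)) c'
        = ρ (F.outTransport (F.dpRep_fconj c) (F.dpRep_fconj c') r h) (v : V)
  res_spec₂ : ∀ {T P : Subgroup S} (hTP : T ≤ P) (c : F.SQVIndex Q₀ P)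
    (v : ↥(F.dpSummand ρ P (F.dpRep_fconj c))) (c' : F.SQVIndex Q₀ T),
      (¬ ∃ r ∈ P, conjSub r (F.dpRep c) = F.dpRep c') →
      F.dpComp (res hTP (F.dpOf ρ P c v)) c' = 0
  ind_spec : ∀ {T R : Subgroup S} (hTR : T ≤ R) (c : F.SQVIndex Q₀ T)
    (v : ↥(F.dpSummand ρ T (F.dpRep_fconj c))) (c' : F.SQVIndex Q₀ R)
    (r : S), r ∈ R → (h : conjSub r (F.dpRep c) = F.dpRep c') →
      F.dpComp (ind hTR (F.dpOf ρ T c v)) c'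
        = ρ (F.outTransport (F.dpRep_fconj c) (F.dpRep_fconj c') r h)
            (F.dpIndTrace ρ (F.dpRep_fconj c) T R hTR (v : V))
  ind_spec₂ : ∀ {T R : Subgroup S} (hTR : T ≤ R) (c : F.SQVIndex Q₀ T)
    (v : ↥(F.dpSummand ρ T (F.dpRep_fconj c))) (c' : F.SQVIndex Q₀ R),
      (¬ ∃ r ∈ R, conjSub r (F.dpRep c) = F.dpRep c') →
      F.dpComp (ind hTR (F.dpOf ρ T c v)) c' = 0

/-- A representation is simple (irreducible) if the module is nonzero and has no proper
nonzero invariant submodules. -/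
def IsSimpleRep (ρ : Representation (ZMod p) (F.OutF Q₀) V) : Prop :=
  Nontrivial V ∧ ∀ W : Submodule (ZMod p) V,
    (∀ (g : F.OutF Q₀), ∀ v ∈ W, ρ g v ∈ W) → W = ⊥ ∨ W = ⊤

end FusionSystem

end SQV

section MyAux

variable {S : Type*} [Group S]

lemma myAux_cosetTrace_const_one {p : ℕ} {V : Type*} [AddCommGroup V] [Module (ZMod p) V]
    {G : Type*} [Group G] [Finite G] (K : Subgroup G) (σ : G →* (V →ₗ[ZMod p] V))
    (hσ : ∀ g, σ g = 1) :
    cosetTrace K σ = ((K.index : ZMod p)) • (1 : V →ₗ[ZMod p] V) := by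
  unfold cosetTrace
  haveI : Finite (G ⧸ K) := Quotient.finite _
  haveI := Fintype.ofFinite (G ⧸ K)
  simp only [hσ, Finset.sum_const, Finset.card_univ]
  rw [Subgroup.index, Nat.card_eq_fintype_card, Nat.cast_smul_eq_nsmul]
  congr!

lemma myAux_le_normalizer {K L : Subgroup S} (hK : IsMulCommutative K) (hL : L ≤ K) :
    K ≤ (normalizer (L : Set S)) := by
  intro k hk
  rw [Subgroup.mem_normalizer_iff]
  intro h
  constructor
  · intro hh
    have h2 : k * h = h * k := by
      have := hK.is_comm.comm ⟨k, hk⟩ ⟨h, hL hh⟩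
      exact congrArg Subtype.val this
    rw [h2]
    simpa using hh
  · intro hh
    have hhK : h ∈ K := by
      have : k⁻¹ * (k * h * k⁻¹) * k ∈ K := K.mul_mem (K.mul_mem (K.inv_mem hk) (hL hh)) hk
      simpa [mul_assoc] using this
    have h2 : k * h = h * k := by
      have := hK.is_comm.comm ⟨k, hk⟩ ⟨h, hhK⟩
      exact congrArg Subtype.val this
    have : k * h * k⁻¹ = h := by rw [h2]; group
    rwa [this] at hh

lemma myAux_dpAction_eq_one [Finite S] (F : FusionSystem S) {p : ℕ}
    {V : Type*} [AddCommGroup V] [Module (ZMod p) V]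
    {Q₀ : Subgroup S} (ρ : Representation (ZMod p) (F.OutF Q₀) V)
    {K L : Subgroup S} (hK : IsMulCommutative K) (hL : L ≤ K) (hc : F.FConj Q₀ L)
    (g : ↥(K ⊓ (normalizer (L : Set S)))) : F.dpAction ρ hc K g = 1 := by
  have hg1 : (↑g : S) ∈ K := g.2.1
  have htriv : F.toAutF L (Subgroup.inclusion
      (inf_le_right : K ⊓ (normalizer (L : Set S)) ≤ (normalizer (L : Set S))) g) = 1 := by
    apply Subtype.ext
    apply MulEquiv.ext
    intro y
    apply Subtype.ext
    show (↑g : S) * ↑y * (↑g : S)⁻¹ = ↑y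
    have hy : (↑y : S) ∈ K := hL y.2
    have h2 : (↑g : S) * ↑y = ↑y * ↑g := by
      have := hK.is_comm.comm ⟨↑g, hg1⟩ ⟨↑y, hy⟩
      exact congrArg Subtype.val this
    rw [h2]; group
  show ρ ((F.outConj _ _) ((F.outMk L) (F.toAutF L (Subgroup.inclusion inf_le_right g)))) = 1
  rw [htriv, map_one, map_one, map_one]

lemma myAux_dpSummand_eq [Finite S] (F : FusionSystem S) {p : ℕ}
    {V : Type*} [AddCommGroup V] [Module (ZMod p) V]
    {Q₀ : Subgroup S} (ρ : Representation (ZMod p) (F.OutF Q₀) V)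
    {K L : Subgroup S} (hK : IsMulCommutative K) (hL : L ≤ K) (hc : F.FConj Q₀ L) :
    F.dpSummand ρ K hc = LinearMap.range
      ((((L.subgroupOf (K ⊓ (normalizer (L : Set S)))).index : ZMod p)) • (1 : V →ₗ[ZMod p] V)) := by
  unfold FusionSystem.dpSummand
  rw [myAux_cosetTrace_const_one _ _ (myAux_dpAction_eq_one F ρ hK hL hc)]

lemma myAux_dpSummand_top [Finite S] (F : FusionSystem S) {p : ℕ}
    {V : Type*} [AddCommGroup V] [Module (ZMod p) V]
    {Q₀ : Subgroup S} (ρ : Representation (ZMod p) (F.OutF Q₀) V)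
    {K : Subgroup S} (hK : IsMulCommutative K) (hc : F.FConj Q₀ K) :
    F.dpSummand ρ K hc = ⊤ := by
  rw [myAux_dpSummand_eq F ρ hK le_rfl hc]
  have h1 : (K.subgroupOf (K ⊓ (normalizer (K : Set S)))).index = 1 := by
    rw [Subgroup.index_eq_one, Subgroup.subgroupOf_eq_top]
    exact inf_le_left
  rw [h1, Nat.cast_one, one_smul]
  exact LinearMap.range_eq_top.mpr fun v => ⟨v, rfl⟩

lemma myAux_dpSummand_bot (p : ℕ) [Fact p.Prime] [Finite S] (hS : IsPGroup p S)
    (F : FusionSystem S)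
    {V : Type*} [AddCommGroup V] [Module (ZMod p) V]
    {Q₀ : Subgroup S} (ρ : Representation (ZMod p) (F.OutF Q₀) V)
    {K L : Subgroup S} (hK : IsMulCommutative K) (hL : L ≤ K) (hne : L ≠ K)
    (hc : F.FConj Q₀ L) :
    F.dpSummand ρ K hc = ⊥ := by
  rw [myAux_dpSummand_eq F ρ hK hL hc]
  set K' := L.subgroupOf (K ⊓ (normalizer (L : Set S))) with hK'
  have hdvd : p ∣ K'.index := by
    have hpG : IsPGroup p ↥(K ⊓ (normalizer (L : Set S))) := hS.to_subgroup _
    obtain ⟨n, hn⟩ := hpG.exists_card_eq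
    have hidx : K'.index ∣ p ^ n := hn ▸ Subgroup.index_dvd_card K'
    obtain ⟨m, -, hm'⟩ := (Nat.dvd_prime_pow (Fact.out : p.Prime)).mp hidx
    rw [hm']
    have hm : m ≠ 0 := by
      intro h0
      rw [h0, pow_zero] at hm'
      have htop : K' = ⊤ := Subgroup.index_eq_one.mp hm'
      have hKN : K ⊓ (normalizer (L : Set S)) = K :=
        le_antisymm inf_le_left (le_inf le_rfl (myAux_le_normalizer hK hL))
      have hKL : K ≤ L := by
        rw [hK', Subgroup.subgroupOf_eq_top] at htop
        rwa [hKN] at htop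
      exact hne (le_antisymm hL hKL)
    exact dvd_pow_self p hm
  have hz : ((K'.index : ZMod p)) = 0 := (ZMod.natCast_eq_zero_iff _ _).mpr hdvd
  rw [hz, zero_smul, LinearMap.range_zero]

end MyAux

/-- Lemma 3.2: under Hypothesis (QV) (`p` odd, `F` saturated on the finite
`p`-group `S`, `Q` not `F`-centric, `V` a simple `𝔽_p[Out_F(Q)]`-module), if `K ≤ S` is
abelian and `S_{Q,V}(K) ≠ 0`, then `K` is `F`-conjugate to `Q`; in particular, for
`α ∈ Iso_F(Q,K)`, `S_{Q,V}(K) = ^αV`: the summand of the class of `K` itself is all of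
`V` and all other summands vanish. -/
theorem abelian_SQV_nonzero_implies_conjugate (p : ℕ) [Fact p.Prime] (hodd : Odd p)
    {S : Type*} [Group S] [Finite S] (hS : IsPGroup p S)
    (F : FusionSystem S) (hF : F.Saturated p)
    (Q₀ : Subgroup S) (hQ : ¬ F.Centric Q₀)
    (V : Type*) [AddCommGroup V] [Module (ZMod p) V]
    (ρ : Representation (ZMod p) (F.OutF Q₀) V) (hρ : F.IsSimpleRep ρ)
    (K : Subgroup S) (hK : IsMulCommutative K)
    (hSK : Nontrivial (F.SQVModule ρ K)) :
    F.FConj Q₀ K ∧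
    (∀ hc : F.FConj Q₀ K, F.dpSummand ρ K hc = ⊤) ∧
    (∀ c : F.SQVIndex Q₀ K, F.dpRep c ≠ K →
      F.dpSummand ρ K (F.dpRep_fconj c) = ⊥) := by
  have hbot : ∀ c : F.SQVIndex Q₀ K, F.dpRep c ≠ K →
      F.dpSummand ρ K (F.dpRep_fconj c) = ⊥ := fun c h =>
    myAux_dpSummand_bot p hS F ρ hK (F.dpRep_le c) h (F.dpRep_fconj c)
  have hex : ∃ c : F.SQVIndex Q₀ K, F.dpRep c = K := by
    by_contra hno
    push_neg at hno
    haveI hss : ∀ c : F.SQVIndex Q₀ K,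
        Subsingleton ↥(F.dpSummand ρ K (F.dpRep_fconj c)) := fun c => by
      rw [hbot c (hno c)]
      infer_instance
    have : Subsingleton (F.SQVModule ρ K) :=
      ⟨fun a b => DFinsupp.ext fun c => Subsingleton.elim _ _⟩
    exact (not_subsingleton _) this
  obtain ⟨c, hcK⟩ := hex
  exact ⟨hcK ▸ F.dpRep_fconj c, fun hc => myAux_dpSummand_top F ρ hK hc, hbot⟩
end

section
/- Assume Hypothesis (Contra). Then: (i) S_{Q,V}(P), S_{Q,V}(R) and S_{Q,V}(T) are all nonzero; (ii) T < P < S and T < R < S (all inclusions strict); (iii) Z(S) ≤ T; and (iv) neither P nor R is abelian. -/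
open Subgroup

section Aux

namespace FusionSystem

variable {S : Type*} [Group S] (F : FusionSystem S)

lemma fconj_refl (P : Subgroup S) : F.FConj P P := by
  refine ⟨MulEquiv.refl P, ?_⟩
  have h : ∀ x ∈ P, (1 : S) * x * (1 : S)⁻¹ ∈ P := by intro x hx; simpa using hx
  have h2 := F.conj_mem P P 1 h
  have he : conjMap (1 : S) P P h = (MulEquiv.refl P).toMonoidHom := by
    ext x; simp [conjMap]
  rwa [he] at h2

lemma fconj_symm {P Q : Subgroup S} (h : F.FConj P Q) : F.FConj Q P := by
  obtain ⟨e, he⟩ := h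
  exact ⟨e.symm, F.inv_mem e he⟩

lemma fconj_trans {P Q R : Subgroup S} (h1 : F.FConj P Q) (h2 : F.FConj Q R) :
    F.FConj P R := by
  obtain ⟨e1, he1⟩ := h1; obtain ⟨e2, he2⟩ := h2
  refine ⟨e1.trans e2, ?_⟩
  have h3 : (e1.trans e2).toMonoidHom = e2.toMonoidHom.comp e1.toMonoidHom := by ext; rfl
  rw [h3]; exact F.comp_mem _ _ he1 he2

lemma centric_of_fconj {P Q : Subgroup S} (h : F.FConj P Q) (hQc : F.Centric Q) :
    F.Centric P := fun L hL => hQc L (F.fconj_trans (F.fconj_symm h) hL)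

end FusionSystem

/-- If the action is trivial, the coset trace is `index • 1`. -/
lemma cosetTrace_const {p : ℕ} {V : Type*} [AddCommGroup V] [Module (ZMod p) V]
    {G : Type*} [Group G] [Finite G] (K : Subgroup G) (σ : G →* (V →ₗ[ZMod p] V))
    (hσ : ∀ g, σ g = 1) : cosetTrace K σ = K.index • (1 : V →ₗ[ZMod p] V) := by
  haveI : Finite (G ⧸ K) := Quotient.finite _
  letI := Fintype.ofFinite (G ⧸ K)
  show (∑ x : G ⧸ K, σ (Quotient.out x)) = K.index • (1 : V →ₗ[ZMod p] V)
  rw [Finset.sum_congr rfl fun x _ => hσ _]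
  rw [Finset.sum_const, Finset.card_univ]
  congr 1
  rw [Subgroup.index, Nat.card_eq_fintype_card]

lemma FusionSystem.not_isCommutative_aux {p : ℕ} [Fact p.Prime] {S : Type*} [Group S]
    [Finite S] (hS : IsPGroup p S) (F : FusionSystem S) {Q₀ : Subgroup S}
    (hQ : ¬ F.Centric Q₀) {V : Type*} [AddCommGroup V] [Module (ZMod p) V]
    (ρ : Representation (ZMod p) (F.OutF Q₀) V)
    {P : Subgroup S} (hP : F.Centric P) (hnt : Nontrivial (F.SQVModule ρ P)) :
    ¬ IsMulCommutative P := by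
  intro hcomm
  haveI := hcomm
  haveI : NeZero p := ⟨(Fact.out : p.Prime).ne_zero⟩
  -- extract a nonzero element
  obtain ⟨x, y, hxy⟩ := hnt
  have hz : ∃ z : F.SQVModule ρ P, z ≠ 0 := by
    by_cases h : x = 0
    · exact ⟨y, fun hy => hxy (by rw [h, hy])⟩
    · exact ⟨x, h⟩
  obtain ⟨z, hz⟩ := hz
  have hcex : ∃ c : F.SQVIndex Q₀ P, z c ≠ 0 := by
    by_contra h
    push_neg at h
    exact hz (DFunLike.ext z 0 fun c => by rw [h c]; rfl)
  obtain ⟨c, hc⟩ := hcex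
  set L := F.dpRep c with hLdef
  have hLP : L ≤ P := F.dpRep_le c
  have hconj : F.FConj Q₀ L := F.dpRep_fconj c
  -- conjugation by elements of P is trivial on L
  have hfix : ∀ s ∈ P, ∀ h ∈ L, s * h * s⁻¹ = h := by
    intro s hs h hh
    rw [Subgroup.mul_comm_of_mem_isMulCommutative (H := P) hs (hLP hh), mul_inv_cancel_right]
  have hPN : P ≤ (normalizer (L : Set S)) := by
    intro s hs
    rw [Subgroup.mem_normalizer_iff]
    intro h
    constructor
    · intro hh; rw [hfix s hs h hh]; exact hh
    · intro hh
      have h2 := hfix s⁻¹ (P.inv_mem hs) _ hh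
      have h3 : s⁻¹ * (s * h * s⁻¹) * s⁻¹⁻¹ = h := by group
      rw [h3] at h2
      rw [h2]; exact hh
  have hPinf : P ⊓ (normalizer (L : Set S)) = P := inf_eq_left.mpr hPN
  -- the action on the summand at c is trivial
  have hact : ∀ g : ↥(P ⊓ (normalizer (L : Set S))), F.dpAction ρ hconj P g = 1 := by
    intro g
    have hgP : (g : S) ∈ P := g.2.1
    have hg1 : F.toAutF L (Subgroup.inclusion inf_le_right g) = 1 := by
      apply Subtype.ext
      apply MulEquiv.toMonoidHom_injective
      apply MonoidHom.ext
      intro w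
      apply Subtype.ext
      show (g : S) * (w : S) * (g : S)⁻¹ = (w : S)
      exact hfix _ hgP _ w.2
    have hrfl : F.dpAction ρ hconj P g
        = ρ ((F.outConj (F.chosenIso hconj) (F.chosenIso_mem hconj))
            (F.outMk L (F.toAutF L (Subgroup.inclusion inf_le_right g)))) := rfl
    rw [hrfl, hg1, map_one, map_one, map_one]
  -- hence the trace is index • 1
  set K := L.subgroupOf (P ⊓ (normalizer (L : Set S))) with hKdef
  have htr : cosetTrace K (F.dpAction ρ hconj P) = K.index • (1 : V →ₗ[ZMod p] V) :=
    cosetTrace_const K _ hact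
  -- the index is a power of p
  have hdvd : K.index ∣ Nat.card ↥(P ⊓ (normalizer (L : Set S))) := Subgroup.index_dvd_card K
  obtain ⟨n, hn⟩ := IsPGroup.iff_card.mp (hS.to_subgroup (P ⊓ (normalizer (L : Set S))))
  rw [hn] at hdvd
  obtain ⟨m, hm, hmeq⟩ := (Nat.dvd_prime_pow (Fact.out : p.Prime)).mp hdvd
  rcases Nat.eq_zero_or_pos m with hm0 | hm1
  · -- index 1: L = P, so Q₀ is conjugate to a centric subgroup
    have hK1 : K.index = 1 := by rw [hmeq, hm0, pow_zero]
    have hKtop : K = ⊤ := Subgroup.index_eq_one.mp hK1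
    have hle : P ⊓ (normalizer (L : Set S)) ≤ L := Subgroup.subgroupOf_eq_top.mp hKtop
    rw [hPinf] at hle
    have hLeq : L = P := le_antisymm hLP hle
    rw [hLeq] at hconj
    exact hQ (F.centric_of_fconj hconj hP)
  · -- index divisible by p: trace is zero, contradicting z c ≠ 0
    have hpd : p ∣ K.index := by
      rw [hmeq]
      exact dvd_pow_self p hm1.ne'
    have hcast : ((K.index : ZMod p)) = 0 := (ZMod.natCast_eq_zero_iff _ _).mpr hpd
    have htr0 : cosetTrace K (F.dpAction ρ hconj P) = 0 := by
      rw [htr, ← Nat.cast_smul_eq_nsmul (ZMod p), hcast, zero_smul]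
    have hmem : (z c : V) ∈ LinearMap.range (cosetTrace K (F.dpAction ρ hconj P)) := (z c).2
    rw [htr0] at hmem
    rw [LinearMap.range_zero, Submodule.mem_bot] at hmem
    exact hc (Subtype.ext hmem)

end Aux

/-- Lemma 3.4: under Hypothesis (Contra): (i) `S_{Q,V}(P)`, `S_{Q,V}(R)`
and `S_{Q,V}(T)` are nonzero; (ii) `T < P < S` and `T < R < S`; (iii) `Z(S) ≤ T`;
(iv) `P` and `R` are not abelian. -/
theorem contra_basic_properties
    (p : ℕ) [Fact p.Prime] (hodd : Odd p) {S : Type*} [Group S] [Finite S]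
    (hS : IsPGroup p S) (F : FusionSystem S) (hF : F.Saturated p)
    (Q₀ : Subgroup S) (hQ : ¬ F.Centric Q₀)
    (V : Type*) [AddCommGroup V] [Module (ZMod p) V]
    (ρ : Representation (ZMod p) (F.OutF Q₀) V) (hρ : F.IsSimpleRep ρ)
    (M : F.SQVMaps ρ) (P R : Subgroup S) (hP : F.Centric P) (hR : F.Centric R)
    (hT : ¬ F.Centric (P ⊓ R))
    (hcomp : (M.ind (inf_le_right : P ⊓ R ≤ R)).comp
      (M.res (inf_le_left : P ⊓ R ≤ P)) ≠ 0)
    :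
    (Nontrivial (F.SQVModule ρ P) ∧ Nontrivial (F.SQVModule ρ R) ∧
      Nontrivial (F.SQVModule ρ (P ⊓ R))) ∧
    (P ⊓ R < P ∧ P < ⊤ ∧ P ⊓ R < R ∧ R < ⊤) ∧
    Subgroup.center S ≤ P ⊓ R ∧
    (¬ IsMulCommutative P ∧ ¬ IsMulCommutative R) := by
  -- extract an element on which the composite is nonzero
  obtain ⟨x, hx⟩ := DFunLike.ne_iff.mp hcomp
  rw [LinearMap.comp_apply, LinearMap.zero_apply] at hx
  have hresx : M.res (inf_le_left : P ⊓ R ≤ P) x ≠ 0 := by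
    intro h; rw [h, map_zero] at hx; exact hx rfl
  have hx0 : x ≠ 0 := by
    intro h; rw [h, map_zero] at hresx; exact hresx rfl
  have hntP : Nontrivial (F.SQVModule ρ P) := nontrivial_of_ne x 0 hx0
  have hntT : Nontrivial (F.SQVModule ρ (P ⊓ R)) := nontrivial_of_ne _ 0 hresx
  have hntR : Nontrivial (F.SQVModule ρ R) := nontrivial_of_ne _ 0 hx
  -- strict inclusions
  have hTP : P ⊓ R < P := lt_of_le_of_ne inf_le_left (fun h => hT (by rw [h]; exact hP))
  have hTR : P ⊓ R < R := lt_of_le_of_ne inf_le_right (fun h => hT (by rw [h]; exact hR))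
  have hPtop : P < ⊤ := by
    rw [lt_top_iff_ne_top]
    intro h
    exact hT (by rw [h, top_inf_eq]; exact hR)
  have hRtop : R < ⊤ := by
    rw [lt_top_iff_ne_top]
    intro h
    exact hT (by rw [h, inf_top_eq]; exact hP)
  -- the center is contained in every centric subgroup
  have hcenter : ∀ W : Subgroup S, F.Centric W → Subgroup.center S ≤ W := by
    intro W hW z hzc
    apply hW W (F.fconj_refl W)
    rw [Subgroup.mem_centralizer_iff]
    intro h _
    exact Subgroup.mem_center_iff.mp hzc h
  refine ⟨⟨hntP, hntR, hntT⟩, ⟨hTP, hPtop, hTR, hRtop⟩,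
    le_inf (hcenter P hP) (hcenter R hR), ?_, ?_⟩
  · exact F.not_isCommutative_aux hS hQ ρ hP hntP
  · exact F.not_isCommutative_aux hS hQ ρ hR hntR
end

section
/- Assume Hypothesis (Contra). Then Z(S) is properly contained in T, and T has order at least p^2. -/
open Subgroup

section Aux

variable {S : Type*} [Group S]

/-- If `L ≤ Z(S)` then every element of `S` normalizes `L`. -/
lemma aux_mem_normalizer {L : Subgroup S} (hL : L ≤ Subgroup.center S) (s : S) :
    s ∈ normalizer (L : Set S) := by
  rw [Subgroup.mem_normalizer_iff]
  intro x
  constructor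
  · intro hx
    have h := Subgroup.mem_center_iff.mp (hL hx) s
    rw [h, mul_inv_cancel_right]
    exact hx
  · intro hx
    have h := Subgroup.mem_center_iff.mp (hL hx) s⁻¹
    have hx' : x = s * x * s⁻¹ := by
      calc x = s⁻¹ * (s * x * s⁻¹) * s := by group
        _ = (s * x * s⁻¹) * s⁻¹ * s := by rw [h]
        _ = s * x * s⁻¹ := by rw [inv_mul_cancel_right]
    rw [hx']
    exact hx

lemma aux_conjAut_eq_one {L : Subgroup S} (hL : L ≤ Subgroup.center S)
    (g : normalizer (L : Set S)) : conjAut L g = 1 := by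
  ext x
  show (↑g : S) * ↑x * (↑g : S)⁻¹ = ↑x
  have h := Subgroup.mem_center_iff.mp (hL x.2) (↑g : S)
  rw [h, mul_inv_cancel_right]

lemma aux_dpAction_eq_one {p : ℕ} {V : Type*} [AddCommGroup V] [Module (ZMod p) V]
    (F : FusionSystem S) {Q₀ : Subgroup S}
    (ρ : Representation (ZMod p) (F.OutF Q₀) V) {L : Subgroup S} (hc : F.FConj Q₀ L)
    (hL : L ≤ Subgroup.center S) (X : Subgroup S) (g : ↥(X ⊓ normalizer (L : Set S))) :
    F.dpAction ρ hc X g = 1 := by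
  have h1 : F.toAutF L (Subgroup.inclusion inf_le_right g) = 1 :=
    Subtype.ext (aux_conjAut_eq_one hL _)
  show (((((ρ : F.OutF Q₀ →* (V →ₗ[ZMod p] V)).comp (F.outConj _ _)).comp
    (F.outMk L)).comp ((F.toAutF L).comp (Subgroup.inclusion inf_le_right))) g) = 1
  simp only [MonoidHom.comp_apply]
  rw [h1, map_one, map_one, map_one]

/-- If a finite `p`-group `G` has a proper subgroup `K`, then `p` divides `[G : K]`. -/
lemma aux_pdvd_quot {p : ℕ} [Fact p.Prime] {G : Type*} [Group G] [Finite G]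
    (hG : IsPGroup p G) (K : Subgroup G) (hK : K ≠ ⊤) : p ∣ Nat.card (G ⧸ K) := by
  have h1 : Nat.card (G ⧸ K) = K.index := rfl
  obtain ⟨n, hn⟩ := hG.exists_card_eq
  have h2 : K.index ∣ p ^ n := hn ▸ Subgroup.index_dvd_card (G := G) (H := K)
  obtain ⟨m, _, he⟩ := (Nat.dvd_prime_pow (Fact.out : p.Prime)).mp h2
  have hm1 : m ≠ 0 := by
    rintro rfl
    rw [pow_zero] at he
    exact hK (Subgroup.index_eq_one.mp he)
  rw [h1, he]
  exact dvd_pow_self p hm1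

lemma aux_pdvd_card {p : ℕ} [Fact p.Prime] {G : Type*} [Group G] [Finite G]
    (hG : IsPGroup p G) (hnt : Nontrivial G) : p ∣ Nat.card G := by
  obtain ⟨n, hn⟩ := hG.exists_card_eq
  have h1 : Nat.card G ≠ 1 := by
    intro h
    obtain ⟨h', -⟩ := Nat.card_eq_one_iff_unique.mp h
    exact not_subsingleton G h'
  have hm1 : n ≠ 0 := by
    rintro rfl
    rw [pow_zero] at hn
    exact h1 hn
  rw [hn]
  exact dvd_pow_self p hm1

lemma aux_fincard_smul_eq_zero {p : ℕ} [NeZero p] {M : Type*} [AddCommGroup M]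
    [Module (ZMod p) M] {α : Type*} (inst : Fintype α) (h : p ∣ Nat.card α) (x : M) :
    @Fintype.card α inst • x = 0 := by
  rw [← @Nat.card_eq_fintype_card α inst, ← Nat.cast_smul_eq_nsmul (ZMod p),
    (ZMod.natCast_eq_zero_iff _ _).mpr h, zero_smul]

lemma aux_cosetTrace_eq_zero {p : ℕ} [Fact p.Prime] {V : Type*} [AddCommGroup V]
    [Module (ZMod p) V] {G : Type*} [Group G] [Finite G] (K : Subgroup G)
    (σ : G →* (V →ₗ[ZMod p] V)) (hσ : ∀ g, σ g = 1)
    (hdvd : p ∣ Nat.card (G ⧸ K)) : cosetTrace K σ = 0 := by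
  haveI : NeZero p := ⟨(Fact.out : p.Prime).ne_zero⟩
  unfold cosetTrace
  simp only [hσ, Finset.sum_const, Finset.card_univ]
  exact aux_fincard_smul_eq_zero _ hdvd 1

/-- An element of the Díaz–Park module all of whose components vanish is zero. -/
lemma aux_sqv_ext {p : ℕ} {V : Type*} [AddCommGroup V] [Module (ZMod p) V]
    [Finite S] (F : FusionSystem S) {Q₀ : Subgroup S}
    {ρ : Representation (ZMod p) (F.OutF Q₀) V} {P : Subgroup S}
    (x : F.SQVModule ρ P) (h : ∀ c, F.dpComp x c = 0) : x = 0 := by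
  refine DFinsupp.ext (fun c => ?_)
  rw [DFinsupp.zero_apply]
  exact Subtype.ext (h c)

/-- Under the contradiction hypothesis with `Z(S) = P ⊓ R`, the induction map
`S_{Q₀,V}(P ⊓ R) → S_{Q₀,V}(R)` is zero. -/
lemma aux_ind_eq_zero {p : ℕ} [Fact p.Prime] [Finite S] (hS : IsPGroup p S)
    (F : FusionSystem S) {Q₀ : Subgroup S} {V : Type*} [AddCommGroup V]
    [Module (ZMod p) V] (ρ : Representation (ZMod p) (F.OutF Q₀) V)
    (M : F.SQVMaps ρ) (P R : Subgroup S)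
    (hZT : Subgroup.center S = P ⊓ R) (hTRne : P ⊓ R ≠ R) :
    M.ind (inf_le_right : P ⊓ R ≤ R) = 0 := by
  letI := Classical.decEq (F.SQVIndex Q₀ (P ⊓ R))
  apply DirectSum.linearMap_ext
  intro c'
  ext w : 1
  simp only [LinearMap.comp_apply, LinearMap.zero_apply, LinearMap.zero_comp]
  show M.ind (inf_le_right : P ⊓ R ≤ R) (F.dpOf ρ (P ⊓ R) c' w) = 0
  have hL'le : F.dpRep c' ≤ P ⊓ R := F.dpRep_le c'
  have hLc : F.dpRep c' ≤ Subgroup.center S := by rw [hZT]; exact hL'le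
  rcases hL'le.lt_or_eq with hlt | heq
  · -- the representative is a proper subgroup of `P ⊓ R`, its summand vanishes
    have hKne : (F.dpRep c').subgroupOf ((P ⊓ R) ⊓ normalizer ((F.dpRep c' : Subgroup S) : Set S)) ≠ ⊤ := by
      intro hKtop
      obtain ⟨t, ht, htn⟩ := SetLike.exists_of_lt hlt
      have htm : t ∈ (P ⊓ R) ⊓ normalizer ((F.dpRep c' : Subgroup S) : Set S) :=
        Subgroup.mem_inf.mpr ⟨ht, aux_mem_normalizer hLc t⟩
      exact htn (Subgroup.subgroupOf_eq_top.mp hKtop htm)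
    have htr : cosetTrace ((F.dpRep c').subgroupOf ((P ⊓ R) ⊓ normalizer ((F.dpRep c' : Subgroup S) : Set S)))
        (F.dpAction ρ (F.dpRep_fconj c') (P ⊓ R)) = 0 :=
      aux_cosetTrace_eq_zero _ _ (fun g => aux_dpAction_eq_one F ρ _ hLc _ g)
        (aux_pdvd_quot (hS.to_subgroup _) _ hKne)
    have hsum : F.dpSummand ρ (P ⊓ R) (F.dpRep_fconj c') = ⊥ := by
      show LinearMap.range (cosetTrace _ _) = ⊥
      rw [htr]
      exact LinearMap.range_zero
    have hw : w = 0 := by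
      apply Subtype.ext
      have h2 : (w : V) ∈ (⊥ : Submodule (ZMod p) V) := hsum.le w.2
      simpa using h2
    rw [hw, map_zero, map_zero]
  · -- the representative equals `P ⊓ R`; the relative trace to `R` vanishes
    have hKne : ((P ⊓ R) ⊓ normalizer ((F.dpRep c' : Subgroup S) : Set S)).subgroupOf
        (R ⊓ normalizer ((F.dpRep c' : Subgroup S) : Set S)) ≠ ⊤ := by
      intro hKtop
      obtain ⟨r, hr, hrn⟩ := SetLike.exists_of_lt (lt_of_le_of_ne inf_le_right hTRne)
      have hrm : r ∈ R ⊓ normalizer ((F.dpRep c' : Subgroup S) : Set S) :=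
        Subgroup.mem_inf.mpr ⟨hr, aux_mem_normalizer hLc r⟩
      have := Subgroup.subgroupOf_eq_top.mp hKtop hrm
      exact hrn (Subgroup.mem_inf.mp this).1
    have htr : F.dpIndTrace ρ (F.dpRep_fconj c') (P ⊓ R) R inf_le_right = 0 :=
      aux_cosetTrace_eq_zero _ _ (fun g => aux_dpAction_eq_one F ρ _ hLc _ g)
        (aux_pdvd_quot (hS.to_subgroup _) _ hKne)
    apply aux_sqv_ext
    intro c''
    by_cases hex : ∃ r ∈ R, conjSub r (F.dpRep c') = F.dpRep c''
    · obtain ⟨r, hr, h⟩ := hex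
      rw [M.ind_spec inf_le_right c' w c'' r hr h, htr]
      simp
    · exact M.ind_spec₂ inf_le_right c' w c'' hex

/-- Reflexivity of `F`-conjugacy. -/
lemma aux_fconj_refl (F : FusionSystem S) (P : Subgroup S) : F.FConj P P := by
  refine ⟨MulEquiv.refl P, ?_⟩
  have h : ∀ x ∈ P, (1 : S) * x * (1 : S)⁻¹ ∈ P := by intro x hx; simpa using hx
  have h2 := F.conj_mem P P 1 h
  have he : conjMap (1 : S) P P h = (MulEquiv.refl P).toMonoidHom := by
    ext x; simp [conjMap]
  rwa [he] at h2

end Aux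

/-- Lemma 3.8: under Hypothesis (Contra), `Z(S) < T` and `|T| ≥ p^2`. -/
theorem contra_center_lt_T
    (p : ℕ) [Fact p.Prime] (hodd : Odd p) {S : Type*} [Group S] [Finite S]
    (hS : IsPGroup p S) (F : FusionSystem S) (hF : F.Saturated p)
    (Q₀ : Subgroup S) (hQ : ¬ F.Centric Q₀)
    (V : Type*) [AddCommGroup V] [Module (ZMod p) V]
    (ρ : Representation (ZMod p) (F.OutF Q₀) V) (hρ : F.IsSimpleRep ρ)
    (M : F.SQVMaps ρ) (P R : Subgroup S) (hP : F.Centric P) (hR : F.Centric R)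
    (hT : ¬ F.Centric (P ⊓ R))
    (hcomp : (M.ind (inf_le_right : P ⊓ R ≤ R)).comp
      (M.res (inf_le_left : P ⊓ R ≤ P)) ≠ 0)
    :
    Subgroup.center S < P ⊓ R ∧ p ^ 2 ≤ Nat.card (P ⊓ R : Subgroup S) := by
  classical
  -- `Z(S) ≤ P` and `Z(S) ≤ R` since `P`, `R` are centric
  have hZP : Subgroup.center S ≤ P :=
    le_trans (Subgroup.center_le_centralizer (P : Set S)) (hP P (aux_fconj_refl F P))
  have hZR : Subgroup.center S ≤ R :=
    le_trans (Subgroup.center_le_centralizer (R : Set S)) (hR R (aux_fconj_refl F R))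
  have hZT : Subgroup.center S ≤ P ⊓ R := le_inf hZP hZR
  have hTRne : P ⊓ R ≠ R := by
    intro h
    apply hT
    rw [h]
    exact hR
  have hZne : Subgroup.center S ≠ P ⊓ R := by
    intro h
    have h0 := aux_ind_eq_zero hS F ρ M P R h hTRne
    apply hcomp
    rw [h0, LinearMap.zero_comp]
  have hZlt : Subgroup.center S < P ⊓ R := lt_of_le_of_ne hZT hZne
  refine ⟨hZlt, ?_⟩
  -- `S` is nontrivial
  have hSnt : Nontrivial S := by
    by_contra h
    rw [not_nontrivial_iff_subsingleton] at h
    apply hZne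
    ext x
    have hx : x = 1 := Subsingleton.elim x 1
    simp [hx, Subgroup.one_mem]
  -- `Z(S)` is nontrivial
  haveI hZnt : Nontrivial (Subgroup.center S) := hS.center_nontrivial
  have hZ' : (Subgroup.center S).subgroupOf (P ⊓ R) ≠ ⊤ := by
    intro h
    have hle : P ⊓ R ≤ Subgroup.center S := Subgroup.subgroupOf_eq_top.mp h
    exact hZne (le_antisymm hZT hle)
  have hdvd1 : p ∣ ((Subgroup.center S).subgroupOf (P ⊓ R)).index :=
    aux_pdvd_quot (hS.to_subgroup (P ⊓ R)) _ hZ'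
  have hdvd2 : p ∣ Nat.card ((Subgroup.center S).subgroupOf (P ⊓ R)) := by
    have hcardeq : Nat.card ((Subgroup.center S).subgroupOf (P ⊓ R))
        = Nat.card (Subgroup.center S) :=
      Nat.card_congr (Subgroup.subgroupOfEquivOfLe hZT).toEquiv
    rw [hcardeq]
    exact aux_pdvd_card (hS.to_subgroup _) hZnt
  have hmul : ((Subgroup.center S).subgroupOf (P ⊓ R)).index
      * Nat.card ((Subgroup.center S).subgroupOf (P ⊓ R)) = Nat.card (P ⊓ R : Subgroup S) :=
    Subgroup.index_mul_card _
  have hdvd : p ^ 2 ∣ Nat.card (P ⊓ R : Subgroup S) := by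
    rw [← hmul, pow_two]
    exact mul_dvd_mul hdvd1 hdvd2
  exact Nat.le_of_dvd Nat.card_pos hdvd
end
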